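/- The second raw moment of the Rayleigh Lomax distribution is E[X²] = θ²(2/β)^{1/λ} Γ(1/λ + 1) − 2θ²(2/β)^{1/(2λ)} Γ(1/(2λ) + 1) + θ². -/

import Mathlib

open MeasureTheory Real Set

lemma rl_beta_rpow {β : ℝ} (hβ : 0 < β) (c : ℝ) :
    (β / 2) ^ (-c) = (2 / β) ^ c := by
  rw [Real.rpow_neg (by positivity), ← Real.inv_rpow (by positivity), inv_div]

/-- first auxiliary integral -/
lemma rl_aux1 {θ lam β : ℝ} (hθ : 0 < θ) (hlam : 0 < lam) (hβ : 0 < β) :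
    ∫ t in Ioi (0:ℝ), exp (-(β / 2) * (t * θ⁻¹) ^ (2 * lam))
      = θ * ((2 / β) ^ (1 / (2 * lam)) * Real.Gamma (1 / (2 * lam) + 1)) := by
  have h2 := integral_comp_mul_right_Ioi
    (fun s => exp (-(β / 2) * s ^ (2 * lam))) 0 (inv_pos.mpr hθ)
  simp only [zero_mul, smul_eq_mul, inv_inv] at h2
  rw [h2, integral_exp_neg_mul_rpow (by positivity) (by positivity),
    show (-1) / (2 * lam) = -(1 / (2 * lam)) by ring, rl_beta_rpow hβ]

/-- second auxiliary integral -/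
lemma rl_aux2 {θ lam β : ℝ} (hθ : 0 < θ) (hlam : 0 < lam) (hβ : 0 < β) :
    ∫ t in Ioi (0:ℝ), 2 * t * exp (-(β / 2) * (t * θ⁻¹) ^ (2 * lam))
      = θ ^ 2 * (2 / β) ^ (1 / lam) * Real.Gamma (1 / lam + 1) := by
  have h1 : ∫ t in Ioi (0:ℝ), 2 * t * exp (-(β / 2) * (t * θ⁻¹) ^ (2 * lam))
      = ∫ t in Ioi (0:ℝ), θ * (2 * (t * θ⁻¹) * exp (-(β / 2) * (t * θ⁻¹) ^ (2 * lam))) := by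
    refine setIntegral_congr_fun measurableSet_Ioi (fun x hx => ?_)
    have : θ * (2 * (x * θ⁻¹)) = 2 * x := by
      field_simp
    rw [← mul_assoc, this]
  have h2 := integral_comp_mul_right_Ioi
    (fun s => 2 * s * exp (-(β / 2) * s ^ (2 * lam))) 0 (inv_pos.mpr hθ)
  simp only [zero_mul, smul_eq_mul, inv_inv] at h2
  rw [h1, integral_const_mul, h2]
  have h3 : ∫ s in Ioi (0:ℝ), 2 * s * exp (-(β / 2) * s ^ (2 * lam))
      = 2 * ∫ s in Ioi (0:ℝ), s ^ (1:ℝ) * exp (-(β / 2) * s ^ (2 * lam)) := by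
    rw [← integral_const_mul]
    refine setIntegral_congr_fun measurableSet_Ioi (fun x hx => ?_)
    rw [Real.rpow_one]; ring
  rw [h3, integral_rpow_mul_exp_neg_mul_rpow (by positivity) (by norm_num) (by positivity)]
  have h4 : ((1:ℝ) + 1) / (2 * lam) = 1 / lam := by
    rw [div_eq_div_iff (by positivity) (by positivity)]; ring
  rw [show (-((1:ℝ) + 1)) / (2 * lam) = -(((1:ℝ) + 1) / (2 * lam)) by ring, h4,
    rl_beta_rpow hβ, Real.Gamma_add_one (one_div_ne_zero hlam.ne')]
  ring

/-- Second raw moment of the Rayleigh Lomax distribution. -/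
theorem rayleigh_lomax_second_moment
    {Ω : Type*} [MeasurableSpace Ω] (μ : Measure Ω) [IsProbabilityMeasure μ]
    (X : Ω → ℝ) (hX : Measurable X)
    (θ lam β : ℝ) (hθ : 0 < θ) (hlam : 0 < lam) (hβ : 0 < β)
    (hsurv : ∀ x : ℝ, -θ ≤ x →
      μ {ω | x < X ω} = ENNReal.ofReal (exp (-(β / 2) * ((θ + x) / θ) ^ (2 * lam))))
    (hsupp : ∀ᵐ ω ∂μ, -θ ≤ X ω)
    (hint : Integrable (fun ω => X ω ^ 2) μ) :
    ∫ ω, X ω ^ 2 ∂μ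
      = θ ^ 2 * (2 / β) ^ (1 / lam) * Real.Gamma (1 / lam + 1)
        - 2 * θ ^ 2 * (2 / β) ^ (1 / (2 * lam)) * Real.Gamma (1 / (2 * lam) + 1)
        + θ ^ 2 := by
  -- integrability of X
  have hXint : Integrable X μ := by
    refine Integrable.mono' (hint.add (integrable_const 1)) hX.aestronglyMeasurable ?_
    refine Filter.Eventually.of_forall (fun ω => ?_)
    simp only [Pi.add_apply, Real.norm_eq_abs]
    nlinarith [sq_abs (X ω), sq_nonneg (|X ω| - 1)]
  -- integrability of X + θ and (X+θ)^2
  have hYint : Integrable (fun ω => X ω + θ) μ := hXint.add (integrable_const θ)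
  have hY2int : Integrable (fun ω => (X ω + θ) ^ 2) μ := by
    have : (fun ω => (X ω + θ) ^ 2) = fun ω => X ω ^ 2 + 2 * θ * X ω + θ ^ 2 := by
      funext ω; ring
    rw [this]
    exact (hint.add (hXint.const_mul (2 * θ))).add (integrable_const _)
  have hYnn : 0 ≤ᵐ[μ] fun ω => X ω + θ := by
    filter_upwards [hsupp] with ω hω
    simp only [Pi.zero_apply]
    linarith
  have hY2nn : 0 ≤ᵐ[μ] fun ω => (X ω + θ) ^ 2 := by
    refine Filter.Eventually.of_forall (fun ω => ?_)
    simp only [Pi.zero_apply]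
    exact sq_nonneg _
  -- first moment of Y = X + θ
  have hEY : ∫ ω, (X ω + θ) ∂μ
      = θ * ((2 / β) ^ (1 / (2 * lam)) * Real.Gamma (1 / (2 * lam) + 1)) := by
    rw [hYint.integral_eq_integral_meas_lt hYnn, ← rl_aux1 hθ hlam hβ]
    refine setIntegral_congr_fun measurableSet_Ioi (fun t ht => ?_)
    have ht0 : (0:ℝ) < t := ht
    have hset : {a | t < X a + θ} = {ω | t - θ < X ω} := by
      ext ω; simp only [Set.mem_setOf_eq]; constructor <;> intro <;> linarith
    rw [hset, measureReal_def, hsurv (t - θ) (by linarith), ENNReal.toReal_ofReal (exp_nonneg _),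
      show θ + (t - θ) = t by ring, div_eq_mul_inv t θ]
  -- second moment of Y = X + θ
  have hEY2 : ∫ ω, (X ω + θ) ^ 2 ∂μ
      = θ ^ 2 * (2 / β) ^ (1 / lam) * Real.Gamma (1 / lam + 1) := by
    rw [hY2int.integral_eq_integral_meas_lt hY2nn]
    have step1 : ∫ t in Ioi (0:ℝ), (μ {a | t < (X a + θ) ^ 2}).toReal
        = ∫ t in Ioi (0:ℝ), exp (-(β / 2) * (Real.sqrt t * θ⁻¹) ^ (2 * lam)) := by
      refine setIntegral_congr_fun measurableSet_Ioi (fun t ht => ?_)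
      have ht0 : (0:ℝ) < t := ht
      have hsq : (0:ℝ) ≤ Real.sqrt t := Real.sqrt_nonneg t
      have hae : {a | t < (X a + θ) ^ 2} =ᵐ[μ] {a | Real.sqrt t < X a + θ} := by
        rw [Filter.eventuallyEq_set]
        filter_upwards [hsupp] with ω hω
        have hy : 0 ≤ X ω + θ := by linarith
        show t < (X ω + θ) ^ 2 ↔ Real.sqrt t < X ω + θ
        rw [← Real.sqrt_lt_sqrt_iff ht0.le, Real.sqrt_sq hy]
      rw [measure_congr hae]
      have hset : {a | Real.sqrt t < X a + θ} = {ω | Real.sqrt t - θ < X ω} := by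
        ext ω; simp only [Set.mem_setOf_eq]; constructor <;> intro <;> linarith
      rw [hset, hsurv (Real.sqrt t - θ) (by linarith), ENNReal.toReal_ofReal (exp_nonneg _),
        show θ + (Real.sqrt t - θ) = Real.sqrt t by ring, div_eq_mul_inv (Real.sqrt t) θ]
    simp only [measureReal_def]
    rw [step1,
      ← integral_comp_rpow_Ioi
        (fun t => exp (-(β / 2) * (Real.sqrt t * θ⁻¹) ^ (2 * lam))) (two_ne_zero),
      ← rl_aux2 hθ hlam hβ]
    refine setIntegral_congr_fun measurableSet_Ioi (fun x hx => ?_)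
    have hx0 : (0:ℝ) < x := hx
    have h2 : x ^ ((2:ℝ)) = x ^ (2:ℕ) := by
      rw [← Real.rpow_natCast x 2]; norm_num
    rw [smul_eq_mul, h2, Real.sqrt_sq hx0.le, show (2:ℝ) - 1 = 1 by norm_num, Real.rpow_one]
    norm_num
  -- put things together
  have expand : ∫ ω, X ω ^ 2 ∂μ
      = (∫ ω, (X ω + θ) ^ 2 ∂μ) - 2 * θ * (∫ ω, (X ω + θ) ∂μ) + θ ^ 2 := by
    have h : ∫ ω, X ω ^ 2 ∂μ
        = ∫ ω, ((X ω + θ) ^ 2 - 2 * θ * (X ω + θ) + θ ^ 2) ∂μ := by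
      congr 1; funext ω; ring
    have hmul : Integrable (fun ω => 2 * θ * (X ω + θ)) μ := hYint.const_mul (2 * θ)
    have hsub : Integrable (fun ω => (X ω + θ) ^ 2 - 2 * θ * (X ω + θ)) μ := hY2int.sub hmul
    rw [h, integral_add hsub (integrable_const _),
      integral_sub hY2int hmul, integral_const_mul, integral_const]
    simp [measure_univ]
  rw [expand, hEY, hEY2]
  ring
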